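/- The operator B defined on im(Q_T^{1/2}) by (Bx)(t) = Q^{1/2} S_{T-t}^* Q_T^{-1/2} x extends to a bounded operator B : H → L²(0,T;H) which is an isometry: ‖Bx‖_{L²(0,T;H)} = |x|_H for all x ∈ H. -/

import Mathlib

open MeasureTheory ContinuousLinearMap
open scoped RealInnerProductSpace

/-- The operator `B` defined on `im(Q_T^{1/2})` by `(B Q_T^{1/2} y)(t) = Q^{1/2} S_{T-t}^* y`
extends to a bounded (isometric) operator `B : H → L²(0,T;H)`:
`‖Bx‖_{L²(0,T;H)} = |x|_H` for all `x ∈ H`. -/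
theorem B_extends_to_isometry
    {H : Type*} [NormedAddCommGroup H] [InnerProductSpace ℝ H] [CompleteSpace H]
    [MeasurableSpace H] [BorelSpace H] [SecondCountableTopology H]
    {T : ℝ} (hT : 0 < T)
    (S : ℝ → H →L[ℝ] H) (Q Qsqrt QT QThalf : H →L[ℝ] H)
    (hQsqrt_sa : IsSelfAdjoint Qsqrt) (hQsqrt_sq : Qsqrt.comp Qsqrt = Q)
    (hQThalf_sa : IsSelfAdjoint QThalf) (hQThalf_sq : QThalf.comp QThalf = QT)
    (hQT_inj : Function.Injective QT) (hQThalf_dense : DenseRange QThalf)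
    (hQTdef : ∀ y : H, ⟪QT y, y⟫ =
      ∫ s in Set.Ioo (0:ℝ) T, ‖Qsqrt ((ContinuousLinearMap.adjoint (S s)) y)‖ ^ 2)
    (hmem : ∀ y : H, MemLp (fun s => Qsqrt ((ContinuousLinearMap.adjoint (S (T - s))) y)) 2
      (MeasureTheory.volume.restrict (Set.Ioo (0:ℝ) T))) :
    ∃ B : H →ₗᵢ[ℝ] (Lp H 2 (MeasureTheory.volume.restrict (Set.Ioo (0:ℝ) T))),
      ∀ y : H, (B (QThalf y) : ℝ → H)
        =ᵐ[MeasureTheory.volume.restrict (Set.Ioo (0:ℝ) T)]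
          fun s => Qsqrt ((ContinuousLinearMap.adjoint (S (T - s))) y) := by
  set μ := MeasureTheory.volume.restrict (Set.Ioo (0:ℝ) T) with hμ
  set f : H → ℝ → H := fun y s => Qsqrt ((ContinuousLinearMap.adjoint (S (T - s))) y) with hf
  -- the basic linear map `y ↦ toLp (f y)`
  have hadd : ∀ y z : H, f (y + z) = f y + f z := by
    intro y z; funext s; simp [hf, map_add]
  have hsmul : ∀ (c : ℝ) (y : H), f (c • y) = c • f y := by
    intro c y; funext s; simp [hf, _root_.map_smul]
  let Lmap : H →ₗ[ℝ] Lp H 2 μ :=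
    { toFun := fun y => (hmem y).toLp (f y)
      map_add' := fun y z => by
        show MemLp.toLp (f (y + z)) (hmem (y + z))
            = MemLp.toLp (f y) (hmem y) + MemLp.toLp (f z) (hmem z)
        rw [MemLp.toLp_congr (hmem (y + z)) ((hmem y).add (hmem z))
          (Filter.EventuallyEq.of_eq (hadd y z)), MemLp.toLp_add]
      map_smul' := fun c y => by
        show MemLp.toLp (f (c • y)) (hmem (c • y))
            = c • MemLp.toLp (f y) (hmem y)
        rw [MemLp.toLp_congr (hmem (c • y)) ((hmem y).const_smul c)
          (Filter.EventuallyEq.of_eq (hsmul c y)), MemLp.toLp_const_smul] }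
  -- key norm identity
  have hQThalf_inj : Function.Injective QThalf := by
    intro a b hab
    apply hQT_inj
    rw [← hQThalf_sq]; simp [ContinuousLinearMap.comp_apply, hab]
  have key : ∀ y : H, ‖Lmap y‖ = ‖QThalf y‖ := by
    intro y
    have h1 : ‖Lmap y‖ ^ 2 = ∫ s, ‖f y s‖ ^ 2 ∂μ := by
      rw [← real_inner_self_eq_norm_sq]
      rw [MeasureTheory.L2.inner_def]
      refine integral_congr_ae ?_
      filter_upwards [(hmem y).coeFn_toLp] with s hs
      simp only [Lmap, LinearMap.coe_mk, AddHom.coe_mk] at hs ⊢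
      rw [hs, real_inner_self_eq_norm_sq]
    have h2 : (∫ s, ‖f y s‖ ^ 2 ∂μ)
        = ∫ s in Set.Ioo (0:ℝ) T, ‖Qsqrt ((ContinuousLinearMap.adjoint (S s)) y)‖ ^ 2 := by
      have hmp : MeasurePreserving (fun s : ℝ => T - s) volume volume :=
        Measure.measurePreserving_sub_left volume T
      have hemb : MeasurableEmbedding (fun s : ℝ => T - s) :=
        (MeasurableEquiv.subLeft T).measurableEmbedding
      have hpre : (fun s : ℝ => T - s) ⁻¹' Set.Ioo 0 T = Set.Ioo 0 T := by
        ext s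
        simp only [Set.mem_preimage, Set.mem_Ioo]
        constructor
        · rintro ⟨ha, hb⟩; exact ⟨by linarith, by linarith⟩
        · rintro ⟨ha, hb⟩; exact ⟨by linarith, by linarith⟩
      calc ∫ s, ‖f y s‖ ^ 2 ∂μ
          = ∫ s in (fun s : ℝ => T - s) ⁻¹' Set.Ioo 0 T,
              ‖Qsqrt ((ContinuousLinearMap.adjoint (S (T - s))) y)‖ ^ 2 := by
            rw [hμ, hpre]
        _ = ∫ s in Set.Ioo (0:ℝ) T, ‖Qsqrt ((ContinuousLinearMap.adjoint (S s)) y)‖ ^ 2 :=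
            hmp.setIntegral_preimage_emb hemb
              (fun s => ‖Qsqrt ((ContinuousLinearMap.adjoint (S s)) y)‖ ^ 2) _
    have h3 : ⟪QT y, y⟫ = ‖QThalf y‖ ^ 2 := by
      have : QT y = QThalf (QThalf y) := by rw [← hQThalf_sq]; rfl
      rw [this, ← real_inner_self_eq_norm_sq]
      have hadj : ContinuousLinearMap.adjoint QThalf = QThalf :=
        (ContinuousLinearMap.isSelfAdjoint_iff' (A := QThalf)).mp hQThalf_sa
      calc ⟪QThalf (QThalf y), y⟫ = ⟪y, QThalf (QThalf y)⟫ := real_inner_comm _ _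
        _ = ⟪ContinuousLinearMap.adjoint QThalf y, QThalf y⟫ :=
            (ContinuousLinearMap.adjoint_inner_left QThalf (QThalf y) y).symm
        _ = ⟪QThalf y, QThalf y⟫ := by rw [hadj]
    have hsq : ‖Lmap y‖ ^ 2 = ‖QThalf y‖ ^ 2 := by
      rw [h1, h2, ← hQTdef y, h3]
    exact (sq_eq_sq₀ (norm_nonneg _) (norm_nonneg _)).mp hsq
  -- build a continuous linear map from the range of `QThalf` into `Lp`
  set K : Submodule ℝ H := LinearMap.range (QThalf : H →ₗ[ℝ] H) with hK
  let eqv : H ≃ₗ[ℝ] K := LinearEquiv.ofInjective (QThalf : H →ₗ[ℝ] H) hQThalf_inj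
  let g₀ : K →ₗ[ℝ] Lp H 2 μ := Lmap.comp (eqv.symm : K →ₗ[ℝ] H)
  have hg₀ : ∀ k : K, ‖g₀ k‖ = ‖k‖ := by
    intro k
    have : (k : H) = QThalf (eqv.symm k) := by
      conv_lhs => rw [← eqv.apply_symm_apply k]
      rfl
    rw [show ‖(k : K)‖ = ‖(k : H)‖ from rfl, this]
    exact key (eqv.symm k)
  let g : K →L[ℝ] Lp H 2 μ := g₀.mkContinuous 1 (fun k => by rw [hg₀ k, one_mul])
  -- extend along the dense inclusion `K ↪ H`
  have hdense : DenseRange (K.subtypeL : K →L[ℝ] H) := by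
    have : Set.range (K.subtypeL : K → H) = (K : Set H) := Subtype.range_coe
    rw [DenseRange, this]
    have : (K : Set H) = Set.range QThalf := rfl
    rw [this]
    exact hQThalf_dense
  have hunif : IsUniformInducing (K.subtypeL : K →L[ℝ] H) :=
    isUniformEmbedding_subtype_val.isUniformInducing
  let B' : H →L[ℝ] Lp H 2 μ := g.extend K.subtypeL
  have hB'e : ∀ k : K, B' (k : H) = g k := fun k =>
    ContinuousLinearMap.extend_eq (f := g) (e := K.subtypeL) hdense hunif k
  have hB'iso : ∀ x : H, ‖B' x‖ = ‖x‖ := by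
    intro x
    refine hdense.induction_on x ?_ ?_
    · exact isClosed_eq (continuous_norm.comp B'.continuous) continuous_norm
    · intro k
      show ‖B' (k : H)‖ = ‖(k : H)‖
      rw [hB'e k]
      exact hg₀ k
  refine ⟨⟨B'.toLinearMap, hB'iso⟩, ?_⟩
  intro y
  have hk : QThalf y ∈ K := ⟨y, rfl⟩
  have h1 : B' (QThalf y) = g (⟨QThalf y, hk⟩ : K) := hB'e ⟨QThalf y, hk⟩
  have h2 : g (⟨QThalf y, hk⟩ : K) = Lmap y := by
    have : (⟨QThalf y, hk⟩ : K) = eqv y := rfl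
    show g₀ _ = Lmap y
    rw [this]
    show Lmap (eqv.symm (eqv y)) = Lmap y
    rw [eqv.symm_apply_apply]
  show (B' (QThalf y) : ℝ → H) =ᵐ[μ] f y
  rw [h1, h2]
  exact (hmem y).coeFn_toLp
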